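/- Let F be a field and let L be a left Leibniz algebra over F with dim_F L = 3 which is not a Lie algebra. Assume Leib(L) ⊆ ζ(L), dim_F Leib(L) = 1, and L/Leib(L) is non-abelian (there exist a,b ∈ L with [a,b] ∉ Leib(L)). Then there exists a basis (a1, a2, a3) of L such that the bracket is given by one of the following multiplication tables (all brackets of basis vectors not listed being zero): (i) [a1,a1] = a3, [a1,a2] = −a1, [a2,a1] = a1; (ii) [a1,a1] = a3, [a1,a2] = −a1 − α·a3, [a2,a1] = a1 + α·a3 for some α ∈ F, α ≠ 0; (iii) [a1,a1] = a3, [a1,a2] = −a1, [a2,a1] = a1, [a2,a2] = γ·a3 for some γ ∈ F with γ ≠ 0 and x² + γ ≠ 0 for all x ∈ F; (iv) [a1,a1] = a3, [a1,a2] = −a1 − α·a3, [a2,a1] = a1 + α·a3, [a2,a2] = γ·a3 for some α, γ ∈ F with α ≠ 0, γ ≠ 0 and x² + γ ≠ 0 for all x ∈ F; (v) [a1,a1] = a3, [a1,a2] = a2, [a2,a1] = −a2; (vi) [a1,a1] = a3, [a1,a2] = a2 + α·a3, [a2,a1] = −a2 − α·a3 for some α ∈ F, α ≠ 0. -/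

import Mathlib

open Module Polynomial

variable {F L : Type*} [Field F] [AddCommGroup L] [Module F L]

/-- The left Leibniz identity for a bilinear bracket. -/
def IsLeibniz (β : L →ₗ[F] L →ₗ[F] L) : Prop :=
  ∀ a b c : L, β (β a b) c = β a (β b c) - β b (β a c)

/-- The Leibniz kernel `Leib(L)`: the subspace spanned by all squares `[a,a]`. -/
def leibKer (β : L →ₗ[F] L →ₗ[F] L) : Submodule F L :=
  Submodule.span F (Set.range fun a => β a a)

/-- The center `ζ(L)` of a Leibniz algebra. -/
def lzCenter (β : L →ₗ[F] L →ₗ[F] L) : Submodule F L where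
  carrier := {x | ∀ y, β x y = 0 ∧ β y x = 0}
  add_mem' := by
    intro a b ha hb y
    refine ⟨?_, ?_⟩
    · rw [map_add, LinearMap.add_apply, (ha y).1, (hb y).1, add_zero]
    · rw [map_add, (ha y).2, (hb y).2, add_zero]
  zero_mem' := by
    intro y
    refine ⟨?_, ?_⟩ <;> simp
  smul_mem' := by
    intro c a ha y
    refine ⟨?_, ?_⟩
    · rw [map_smul, LinearMap.smul_apply, (ha y).1, smul_zero]
    · rw [map_smul, (ha y).2, smul_zero]

/-- The derived subalgebra `[L,L]`. -/
def leibDerived (β : L →ₗ[F] L →ₗ[F] L) : Submodule F L :=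
  Submodule.span F {x | ∃ a b : L, β a b = x}

/-- The lower central series: `leibGamma β 1 = ⊤`, `leibGamma β (k+1) = [L, leibGamma β k]`. -/
def leibGamma (β : L →ₗ[F] L →ₗ[F] L) : ℕ → Submodule F L
  | 0 => ⊤
  | 1 => ⊤
  | (n+2) => Submodule.span F {x | ∃ a b : L, b ∈ leibGamma β (n+1) ∧ β a b = x}

/-- The derived series: `leibDelta β 0 = ⊤`, `leibDelta β (n+1) = [leibDelta β n, leibDelta β n]`. -/
def leibDelta (β : L →ₗ[F] L →ₗ[F] L) : ℕ → Submodule F L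
  | 0 => ⊤
  | (n+1) => Submodule.span F
      {x | ∃ a ∈ leibDelta β n, ∃ b ∈ leibDelta β n, β a b = x}

/-- Multiplication table predicate: the brackets of the triple `a` are given by `t`. -/
def MulTbl (β : L →ₗ[F] L →ₗ[F] L) (a : Fin 3 → L) (t : Fin 3 → Fin 3 → L) : Prop :=
  ∀ i j, β (a i) (a j) = t i j


section auxiliary

lemma li_swapA {x y c : L} {s : F} (hs : s ≠ 0)
    (h : LinearIndependent F ![x, y, c]) :
    LinearIndependent F ![x, -y, s • c] := by
  rw [Fintype.linearIndependent_iff] at h ⊢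
  intro g hg
  simp only [Fin.sum_univ_three, Matrix.cons_val_zero, Matrix.cons_val_one,
    Matrix.head_cons, Matrix.cons_val_two, Matrix.tail_cons] at hg
  have key := h ![g 0, -g 1, g 2 * s] ?_
  · intro i
    have e0 := key 0
    have e1 := key 1
    have e2 := key 2
    simp only [Matrix.cons_val_zero, Matrix.cons_val_one, Matrix.head_cons,
      Matrix.cons_val_two, Matrix.tail_cons, neg_eq_zero, mul_eq_zero] at e0 e1 e2
    fin_cases i
    · exact e0
    · exact e1
    · exact (Or.resolve_right e2 hs)
  · simp only [Fin.sum_univ_three, Matrix.cons_val_zero, Matrix.cons_val_one,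
      Matrix.head_cons, Matrix.cons_val_two, Matrix.tail_cons]
    rw [show (g 0) • x + (-g 1) • y + (g 2 * s) • c
        = g 0 • x + g 1 • (-y) + g 2 • (s • c) by module]
    exact hg

lemma li_swapB {x y c : L} {t : F} (ht : t ≠ 0)
    (h : LinearIndependent F ![x, y, c]) :
    LinearIndependent F ![-y, x, t • c] := by
  rw [Fintype.linearIndependent_iff] at h ⊢
  intro g hg
  simp only [Fin.sum_univ_three, Matrix.cons_val_zero, Matrix.cons_val_one,
    Matrix.head_cons, Matrix.cons_val_two, Matrix.tail_cons] at hg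
  have key := h ![g 1, -g 0, g 2 * t] ?_
  · intro i
    have e0 := key 0
    have e1 := key 1
    have e2 := key 2
    simp only [Matrix.cons_val_zero, Matrix.cons_val_one, Matrix.head_cons,
      Matrix.cons_val_two, Matrix.tail_cons, neg_eq_zero, mul_eq_zero] at e0 e1 e2
    fin_cases i
    · exact e1
    · exact e0
    · exact (Or.resolve_right e2 ht)
  · simp only [Fin.sum_univ_three, Matrix.cons_val_zero, Matrix.cons_val_one,
      Matrix.head_cons, Matrix.cons_val_two, Matrix.tail_cons]
    rw [show (g 1) • x + (-g 0) • y + (g 2 * t) • c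
        = g 0 • (-y) + g 1 • x + g 2 • (t • c) by module]
    exact hg

lemma li_subst {x y c : L} (z0 : F)
    (h : LinearIndependent F ![x, y, c]) :
    LinearIndependent F ![x, y + z0 • x, c] := by
  rw [Fintype.linearIndependent_iff] at h ⊢
  intro g hg
  simp only [Fin.sum_univ_three, Matrix.cons_val_zero, Matrix.cons_val_one,
    Matrix.head_cons, Matrix.cons_val_two, Matrix.tail_cons] at hg
  have key := h ![g 0 + g 1 * z0, g 1, g 2] ?_
  · intro i
    have e0 := key 0
    have e1 := key 1
    have e2 := key 2
    simp only [Matrix.cons_val_zero, Matrix.cons_val_one, Matrix.head_cons,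
      Matrix.cons_val_two, Matrix.tail_cons] at e0 e1 e2
    fin_cases i
    · simpa [e1] using e0
    · exact e1
    · exact e2
  · simp only [Fin.sum_univ_three, Matrix.cons_val_zero, Matrix.cons_val_one,
      Matrix.head_cons, Matrix.cons_val_two, Matrix.tail_cons]
    rw [show (g 0 + g 1 * z0) • x + (g 1) • y + (g 2) • c
        = g 0 • x + g 1 • (y + z0 • x) + g 2 • c by module]
    exact hg

lemma mk_tbl (β : L →ₗ[F] L →ₗ[F] L) {e0 e1 e2 : L} {t : Fin 3 → Fin 3 → L}
    (h2L : ∀ u, β e2 u = 0) (h2R : ∀ u, β u e2 = 0)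
    (ht02 : t 0 2 = 0) (ht12 : t 1 2 = 0) (ht20 : t 2 0 = 0)
    (ht21 : t 2 1 = 0) (ht22 : t 2 2 = 0)
    (h00 : β e0 e0 = t 0 0) (h01 : β e0 e1 = t 0 1)
    (h10 : β e1 e0 = t 1 0) (h11 : β e1 e1 = t 1 1) :
    MulTbl β ![e0, e1, e2] t := by
  intro i j
  fin_cases i <;> fin_cases j <;>
    first
      | exact h00 | exact h01 | exact h10 | exact h11
      | exact (h2L _).trans ht20.symm | exact (h2L _).trans ht21.symm
      | exact (h2L _).trans ht22.symm
      | exact (h2R _).trans ht02.symm | exact (h2R _).trans ht12.symm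

lemma caseA (β : L →ₗ[F] L →ₗ[F] L) (hdim : finrank F L = 3)
    {x y c : L} {p s t : F}
    (hli : LinearIndependent F ![x, y, c])
    (hcL : ∀ u : L, β c u = 0) (hcR : ∀ u : L, β u c = 0)
    (hxy : β x y = x + p • c) (hyx : β y x = -(x + p • c))
    (hyy : β y y = t • c) (hxx : β x x = s • c) (hs : s ≠ 0)
    (hcond : t = 0 ∨ (∀ z : F, z ^ 2 + t / s ≠ 0)) :
    ∃ b : Basis (Fin 3) F L,
      MulTbl β ⇑b ![![b 2, -(b 0), 0], ![b 0, 0, 0], ![0, 0, 0]] ∨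
      (∃ α : F, α ≠ 0 ∧ MulTbl β ⇑b ![![b 2, -(b 0) - α • b 2, 0], ![b 0 + α • b 2, 0, 0], ![0, 0, 0]]) ∨
      (∃ γ : F, γ ≠ 0 ∧ (∀ x : F, x ^ 2 + γ ≠ 0) ∧
        MulTbl β ⇑b ![![b 2, -(b 0), 0], ![b 0, γ • b 2, 0], ![0, 0, 0]]) ∨
      (∃ α γ : F, α ≠ 0 ∧ γ ≠ 0 ∧ (∀ x : F, x ^ 2 + γ ≠ 0) ∧
        MulTbl β ⇑b ![![b 2, -(b 0) - α • b 2, 0], ![b 0 + α • b 2, γ • b 2, 0], ![0, 0, 0]]) ∨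
      MulTbl β ⇑b ![![b 2, b 1, 0], ![-(b 1), 0, 0], ![0, 0, 0]] ∨
      (∃ α : F, α ≠ 0 ∧ MulTbl β ⇑b ![![b 2, b 1 + α • b 2, 0], ![-(b 1) - α • b 2, 0, 0], ![0, 0, 0]]) := by
  have card : Fintype.card (Fin 3) = finrank F L := by simp [hdim]
  have hli' := li_swapA hs hli
  refine ⟨basisOfLinearIndependentOfCardEqFinrank hli' card, ?_⟩
  have hcoe : ⇑(basisOfLinearIndependentOfCardEqFinrank hli' card) = ![x, -y, s • c] :=
    coe_basisOfLinearIndependentOfCardEqFinrank _ _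
  have h2L : ∀ u : L, β (s • c) u = 0 := by
    intro u; rw [map_smul]; simp [hcL u]
  have h2R : ∀ u : L, β u (s • c) = 0 := by
    intro u; rw [map_smul, hcR, smul_zero]
  have hps : (p / s) • (s • c) = p • c := by rw [smul_smul, div_mul_cancel₀ _ hs]
  have hts : (t / s) • (s • c) = t • c := by rw [smul_smul, div_mul_cancel₀ _ hs]
  have b01 : β x (-y) = -(x + p • c) := by rw [map_neg, hxy]
  have b10 : β (-y) x = x + p • c := by
    simp only [map_neg, LinearMap.neg_apply, hyx, neg_neg]
  have b11 : β (-y) (-y) = t • c := by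
    simp only [map_neg, LinearMap.neg_apply, hyy, neg_neg]
  rcases hcond with ht0 | hroot
  · by_cases hp : p = 0
    · left
      rw [hcoe]
      refine mk_tbl β h2L h2R rfl rfl rfl rfl rfl hxx ?_ ?_ ?_
      · rw [b01, hp]; show -(x + (0:F) • c) = -x; rw [zero_smul, add_zero]
      · rw [b10, hp]; show x + (0:F) • c = x; rw [zero_smul, add_zero]
      · rw [b11, ht0]; show (0:F) • c = 0; rw [zero_smul]
    · right; left
      refine ⟨p / s, div_ne_zero hp hs, ?_⟩
      rw [hcoe]
      refine mk_tbl β h2L h2R rfl rfl rfl rfl rfl hxx ?_ ?_ ?_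
      · rw [b01]; show -(x + p • c) = -x - (p/s) • (s • c); rw [hps]; module
      · rw [b10]; show x + p • c = x + (p/s) • (s • c); rw [hps]
      · rw [b11, ht0]; show (0:F) • c = 0; rw [zero_smul]
  · have hγ : t / s ≠ 0 := by simpa using hroot 0
    by_cases hp : p = 0
    · right; right; left
      refine ⟨t / s, hγ, hroot, ?_⟩
      rw [hcoe]
      refine mk_tbl β h2L h2R rfl rfl rfl rfl rfl hxx ?_ ?_ ?_
      · rw [b01, hp]; show -(x + (0:F) • c) = -x; rw [zero_smul, add_zero]
      · rw [b10, hp]; show x + (0:F) • c = x; rw [zero_smul, add_zero]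
      · rw [b11]; show t • c = (t/s) • (s • c); rw [hts]
    · right; right; right; left
      refine ⟨p / s, t / s, div_ne_zero hp hs, hγ, hroot, ?_⟩
      rw [hcoe]
      refine mk_tbl β h2L h2R rfl rfl rfl rfl rfl hxx ?_ ?_ ?_
      · rw [b01]; show -(x + p • c) = -x - (p/s) • (s • c); rw [hps]; module
      · rw [b10]; show x + p • c = x + (p/s) • (s • c); rw [hps]
      · rw [b11]; show t • c = (t/s) • (s • c); rw [hts]

lemma caseB (β : L →ₗ[F] L →ₗ[F] L) (hdim : finrank F L = 3)
    {x y c : L} {p t : F}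
    (hli : LinearIndependent F ![x, y, c])
    (hcL : ∀ u : L, β c u = 0) (hcR : ∀ u : L, β u c = 0)
    (hxy : β x y = x + p • c) (hyx : β y x = -(x + p • c))
    (hyy : β y y = t • c) (hxx : β x x = 0) (ht : t ≠ 0) :
    ∃ b : Basis (Fin 3) F L,
      MulTbl β ⇑b ![![b 2, -(b 0), 0], ![b 0, 0, 0], ![0, 0, 0]] ∨
      (∃ α : F, α ≠ 0 ∧ MulTbl β ⇑b ![![b 2, -(b 0) - α • b 2, 0], ![b 0 + α • b 2, 0, 0], ![0, 0, 0]]) ∨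
      (∃ γ : F, γ ≠ 0 ∧ (∀ x : F, x ^ 2 + γ ≠ 0) ∧
        MulTbl β ⇑b ![![b 2, -(b 0), 0], ![b 0, γ • b 2, 0], ![0, 0, 0]]) ∨
      (∃ α γ : F, α ≠ 0 ∧ γ ≠ 0 ∧ (∀ x : F, x ^ 2 + γ ≠ 0) ∧
        MulTbl β ⇑b ![![b 2, -(b 0) - α • b 2, 0], ![b 0 + α • b 2, γ • b 2, 0], ![0, 0, 0]]) ∨
      MulTbl β ⇑b ![![b 2, b 1, 0], ![-(b 1), 0, 0], ![0, 0, 0]] ∨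
      (∃ α : F, α ≠ 0 ∧ MulTbl β ⇑b ![![b 2, b 1 + α • b 2, 0], ![-(b 1) - α • b 2, 0, 0], ![0, 0, 0]]) := by
  have card : Fintype.card (Fin 3) = finrank F L := by simp [hdim]
  have hli' := li_swapB ht hli
  refine ⟨basisOfLinearIndependentOfCardEqFinrank hli' card, ?_⟩
  have hcoe : ⇑(basisOfLinearIndependentOfCardEqFinrank hli' card) = ![-y, x, t • c] :=
    coe_basisOfLinearIndependentOfCardEqFinrank _ _
  have h2L : ∀ u : L, β (t • c) u = 0 := by
    intro u; rw [map_smul]; simp [hcL u]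
  have h2R : ∀ u : L, β u (t • c) = 0 := by
    intro u; rw [map_smul, hcR, smul_zero]
  have hpt : (p / t) • (t • c) = p • c := by rw [smul_smul, div_mul_cancel₀ _ ht]
  have b00 : β (-y) (-y) = t • c := by
    simp only [map_neg, LinearMap.neg_apply, hyy, neg_neg]
  have b01 : β (-y) x = x + p • c := by
    simp only [map_neg, LinearMap.neg_apply, hyx, neg_neg]
  have b10 : β x (-y) = -(x + p • c) := by rw [map_neg, hxy]
  by_cases hp : p = 0
  · right; right; right; right; left
    rw [hcoe]
    refine mk_tbl β h2L h2R rfl rfl rfl rfl rfl b00 ?_ ?_ hxx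
    · rw [b01, hp]; show x + (0:F) • c = x; rw [zero_smul, add_zero]
    · rw [b10, hp]; show -(x + (0:F) • c) = -x; rw [zero_smul, add_zero]
  · right; right; right; right; right
    refine ⟨p / t, div_ne_zero hp ht, ?_⟩
    rw [hcoe]
    refine mk_tbl β h2L h2R rfl rfl rfl rfl rfl b00 ?_ ?_ hxx
    · rw [b01]; show x + p • c = x + (p/t) • (t • c); rw [hpt]
    · rw [b10]; show -(x + p • c) = -x - (p/t) • (t • c); rw [hpt]; module

end auxiliary

theorem stmt2 (β : L →ₗ[F] L →ₗ[F] L) (hLeib : IsLeibniz β)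
    (hdim : finrank F L = 3) (hnotLie : ∃ a : L, β a a ≠ 0)
    (hsub : leibKer β ≤ lzCenter β) (hk : finrank F (leibKer β) = 1)
    (hnab : ∃ a b : L, β a b ∉ leibKer β) :
    ∃ b : Basis (Fin 3) F L,
      MulTbl β ⇑b ![![b 2, -(b 0), 0], ![b 0, 0, 0], ![0, 0, 0]] ∨
      (∃ α : F, α ≠ 0 ∧ MulTbl β ⇑b ![![b 2, -(b 0) - α • b 2, 0], ![b 0 + α • b 2, 0, 0], ![0, 0, 0]]) ∨
      (∃ γ : F, γ ≠ 0 ∧ (∀ x : F, x ^ 2 + γ ≠ 0) ∧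
        MulTbl β ⇑b ![![b 2, -(b 0), 0], ![b 0, γ • b 2, 0], ![0, 0, 0]]) ∨
      (∃ α γ : F, α ≠ 0 ∧ γ ≠ 0 ∧ (∀ x : F, x ^ 2 + γ ≠ 0) ∧
        MulTbl β ⇑b ![![b 2, -(b 0) - α • b 2, 0], ![b 0 + α • b 2, γ • b 2, 0], ![0, 0, 0]]) ∨
      MulTbl β ⇑b ![![b 2, b 1, 0], ![-(b 1), 0, 0], ![0, 0, 0]] ∨
      (∃ α : F, α ≠ 0 ∧ MulTbl β ⇑b ![![b 2, b 1 + α • b 2, 0], ![-(b 1) - α • b 2, 0, 0], ![0, 0, 0]]) := by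
  classical
  obtain ⟨v, hv0, hvgen⟩ := finrank_eq_one_iff'.mp hk
  set c : L := (v : L) with hcdef
  have hcK : c ∈ leibKer β := v.2
  have hc0 : c ≠ 0 := fun h => hv0 (Subtype.ext h)
  have hmem : ∀ z ∈ leibKer β, ∃ μ : F, z = μ • c := by
    intro z hz
    obtain ⟨μ, hμ⟩ := hvgen ⟨z, hz⟩
    exact ⟨μ, by simpa using (congrArg Subtype.val hμ).symm⟩
  have hmul : ∀ μ : F, μ • c ∈ leibKer β := fun μ => Submodule.smul_mem _ μ hcK
  have hcL : ∀ u : L, β c u = 0 := fun u => (hsub hcK u).1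
  have hcR : ∀ u : L, β u c = 0 := fun u => (hsub hcK u).2
  have hsqK : ∀ u : L, β u u ∈ leibKer β := fun u => Submodule.subset_span ⟨u, rfl⟩
  have hsq : ∀ u : L, ∃ μ : F, β u u = μ • c := fun u => hmem _ (hsqK u)
  have hsymm : ∀ u z : L, ∃ μ : F, β u z = -β z u + μ • c := by
    intro u z
    have hm : β u z + β z u ∈ leibKer β := by
      have e : β u z + β z u = β (u + z) (u + z) - β u u - β z z := by
        simp only [map_add, LinearMap.add_apply]
        abel
      rw [e]
      exact Submodule.sub_mem _ (Submodule.sub_mem _ (hsqK _) (hsqK _)) (hsqK _)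
    obtain ⟨μ, hμ⟩ := hmem _ hm
    refine ⟨μ, ?_⟩
    rw [← hμ]
    abel
  obtain ⟨a, b, hab⟩ := hnab
  set w : L := β a b with hwdef
  have hwnz : ∀ d μ : F, d • w = μ • c → d = 0 := by
    intro d μ hdμ
    by_contra hd
    apply hab
    have hw' : w = (d⁻¹ * μ) • c := by
      rw [mul_smul, ← hdμ, smul_smul, inv_mul_cancel₀ hd, one_smul]
    rw [hw']
    exact hmul _
  have hw0 : w ≠ 0 := by
    intro h
    apply hab
    rw [h]
    exact Submodule.zero_mem _
  obtain ⟨sa, hsa⟩ := hsq a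
  obtain ⟨tb, htb⟩ := hsq b
  have card : Fintype.card (Fin 3) = finrank F L := by simp [hdim]
  -- linear independence of a, b, c
  have hli1 : LinearIndependent F ![a, b, c] := by
    rw [Fintype.linearIndependent_iff]
    intro g hg
    simp only [Fin.sum_univ_three, Matrix.cons_val_zero, Matrix.cons_val_one,
      Matrix.head_cons, Matrix.cons_val_two, Matrix.tail_cons] at hg
    have e1 : g 0 • w + (g 1 * tb) • c = 0 := by
      have h0 := congrArg (fun z : L => β z b) hg
      simpa only [map_add, map_smul, LinearMap.add_apply, LinearMap.smul_apply,
        htb, hcL, map_zero, LinearMap.zero_apply, smul_zero, smul_smul, add_zero,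
        ← hwdef] using h0
    have hg0 : g 0 = 0 := by
      refine hwnz (g 0) (-(g 1 * tb)) ?_
      rw [neg_smul]
      linear_combination (norm := module) e1
    rw [hg0, zero_smul, zero_add] at hg
    have e2 : g 1 • w = 0 := by
      have h0 := congrArg (fun z : L => β a z) hg
      simpa only [map_add, map_smul, hcR, smul_zero, add_zero, map_zero, ← hwdef] using h0
    have hg1 : g 1 = 0 := hwnz (g 1) 0 (by rw [e2, zero_smul])
    rw [hg1, zero_smul, zero_add] at hg
    have hg2 : g 2 = 0 := by
      rcases smul_eq_zero.mp hg with h | h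
      · exact h
      · exact absurd h hc0
    intro i
    fin_cases i
    · exact hg0
    · exact hg1
    · exact hg2
  -- coordinates of w
  have hrep1 := (basisOfLinearIndependentOfCardEqFinrank hli1 card).sum_repr w
  rw [coe_basisOfLinearIndependentOfCardEqFinrank] at hrep1
  set σ : F := ((basisOfLinearIndependentOfCardEqFinrank hli1 card).repr w) 0 with hσdef
  set τ : F := ((basisOfLinearIndependentOfCardEqFinrank hli1 card).repr w) 1 with hτdef
  set ρ : F := ((basisOfLinearIndependentOfCardEqFinrank hli1 card).repr w) 2 with hρdef
  have hwrep : σ • a + τ • b + ρ • c = w := by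
    rw [← hrep1, Fin.sum_univ_three]
    simp only [Matrix.cons_val_zero, Matrix.cons_val_one, Matrix.head_cons,
      Matrix.cons_val_two, Matrix.tail_cons]
    rfl
  -- construct y with β w y = w + p • c
  obtain ⟨y, p, hxy⟩ : ∃ (y : L) (p : F), β w y = w + p • c := by
    by_cases hτ0 : τ = 0
    · have hσ0 : σ ≠ 0 := by
        intro hσ0
        apply hab
        rw [← hwrep, hσ0, hτ0, zero_smul, zero_smul, zero_add, zero_add]
        exact hmul _
      refine ⟨σ⁻¹ • b, 0, ?_⟩
      have hwb : β w b = σ • w := by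
        conv_lhs => rw [← hwrep]
        simp only [map_add, map_smul, LinearMap.add_apply, LinearMap.smul_apply,
          htb, hcL, hτ0, zero_smul, add_zero, smul_zero, ← hwdef]
      rw [map_smul, hwb, smul_smul, inv_mul_cancel₀ hσ0, one_smul, zero_smul, add_zero]
    · obtain ⟨r, hba⟩ := hsymm b a
      refine ⟨(-τ⁻¹) • a, -τ⁻¹ * (σ * sa + τ * r), ?_⟩
      have hwa : β w a = (-τ) • w + (σ * sa + τ * r) • c := by
        conv_lhs => rw [← hwrep]
        simp only [map_add, LinearMap.add_apply, map_smul, LinearMap.smul_apply,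
          hsa, hba, hcL, ← hwdef]
        module
      rw [map_smul, hwa]
      rw [show (-τ⁻¹) • ((-τ) • w + (σ * sa + τ * r) • c)
          = (-τ⁻¹ * -τ) • w + (-τ⁻¹ * (σ * sa + τ * r)) • c by module]
      rw [show -τ⁻¹ * -τ = τ⁻¹ * τ by ring, inv_mul_cancel₀ hτ0, one_smul]
  obtain ⟨s, hxx⟩ := hsq w
  obtain ⟨t, hyy⟩ := hsq y
  -- derive β y w = -(w + p • c)
  obtain ⟨r, hyx0⟩ := hsymm y w
  rw [hxy] at hyx0
  have hyx : β y w = -(w + p • c) := by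
    have hL := hLeib w y y
    rw [hxy, hyy] at hL
    have lhs1 : β (w + p • c) y = w + p • c := by
      rw [map_add, LinearMap.add_apply, map_smul, LinearMap.smul_apply, hcL,
        smul_zero, add_zero, hxy]
    have rhs1 : β w (t • c) = 0 := by rw [map_smul, hcR, smul_zero]
    have rhs2 : β y (w + p • c) = β y w := by
      rw [map_add, map_smul, hcR, smul_zero, add_zero]
    rw [lhs1, rhs1, rhs2, hyx0, zero_sub] at hL
    have hr : r • c = 0 := by linear_combination (norm := module) hL
    rw [hyx0, hr, add_zero]
  -- derive s + s = 0
  have h2s : (s + s) • c = 0 := by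
    have hL2 := hLeib w y w
    rw [hxy, hyx, hxx] at hL2
    have l1 : β (w + p • c) w = s • c := by
      rw [map_add, LinearMap.add_apply, map_smul, LinearMap.smul_apply, hcL,
        smul_zero, add_zero, hxx]
    have l2 : β w (-(w + p • c)) = -(s • c) := by
      rw [map_neg, map_add, map_smul, hcR, smul_zero, add_zero, hxx]
    have l3 : β y (s • c) = 0 := by rw [map_smul, hcR, smul_zero]
    rw [l1, l2, l3, sub_zero] at hL2
    linear_combination (norm := module) hL2
  -- linear independence of w, y, c
  have hli2 : LinearIndependent F ![w, y, c] := by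
    rw [Fintype.linearIndependent_iff]
    intro g hg
    simp only [Fin.sum_univ_three, Matrix.cons_val_zero, Matrix.cons_val_one,
      Matrix.head_cons, Matrix.cons_val_two, Matrix.tail_cons] at hg
    have e1 : g 0 • (w + p • c) + (g 1 * t) • c = 0 := by
      have h0 := congrArg (fun z : L => β z y) hg
      simpa only [map_add, map_smul, LinearMap.add_apply, LinearMap.smul_apply,
        hxy, hyy, hcL, map_zero, LinearMap.zero_apply, smul_zero, smul_smul,
        add_zero] using h0
    have hg0 : g 0 = 0 := by
      refine hwnz (g 0) (-(g 0 * p + g 1 * t)) ?_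
      rw [neg_smul]
      linear_combination (norm := module) e1
    rw [hg0, zero_smul, zero_add] at hg
    have e2 : g 1 • (w + p • c) = 0 := by
      have h0 := congrArg (fun z : L => β w z) hg
      simpa only [map_add, map_smul, hxy, hcR, smul_zero, add_zero, map_zero] using h0
    have hg1 : g 1 = 0 := by
      refine hwnz (g 1) (-(g 1 * p)) ?_
      rw [neg_smul]
      linear_combination (norm := module) e2
    rw [hg1, zero_smul, zero_add] at hg
    have hg2 : g 2 = 0 := by
      rcases smul_eq_zero.mp hg with h | h
      · exact h
      · exact absurd h hc0
    intro i
    fin_cases i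
    · exact hg0
    · exact hg1
    · exact hg2
  -- square formula
  have sqf : ∀ g0 g1 g2 : F, β (g0 • w + g1 • y + g2 • c) (g0 • w + g1 • y + g2 • c)
      = (g0 * g0 * s + g1 * g1 * t) • c := by
    intro g0 g1 g2
    simp only [map_add, LinearMap.add_apply, map_smul, LinearMap.smul_apply,
      hxy, hyx, hxx, hyy, hcL, hcR, smul_zero, add_zero, map_zero,
      LinearMap.zero_apply]
    module
  by_cases hs0 : s = 0
  · -- s = 0 : need t ≠ 0, case B
    have ht : t ≠ 0 := by
      intro ht0
      obtain ⟨u, hu⟩ := hnotLie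
      apply hu
      have hrep2 := (basisOfLinearIndependentOfCardEqFinrank hli2 card).sum_repr u
      rw [coe_basisOfLinearIndependentOfCardEqFinrank] at hrep2
      rw [Fin.sum_univ_three] at hrep2
      simp only [Matrix.cons_val_zero, Matrix.cons_val_one, Matrix.head_cons,
        Matrix.cons_val_two, Matrix.tail_cons] at hrep2
      rw [← hrep2, sqf, hs0, ht0]
      simp
    have hxx0 : β w w = 0 := by rw [hxx, hs0, zero_smul]
    exact caseB β hdim hli2 hcL hcR hxy hyx hyy hxx0 ht
  · by_cases hroot : ∀ z : F, z ^ 2 + t / s ≠ 0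
    · exact caseA β hdim hli2 hcL hcR hxy hyx hyy hxx hs0 (Or.inr hroot)
    · push_neg at hroot
      obtain ⟨z0, hz0⟩ := hroot
      have hts : t + z0 * z0 * s = 0 := by
        have h1 : (z0 ^ 2 + t / s) * s = 0 := by rw [hz0, zero_mul]
        field_simp at h1
        linear_combination h1
      have hliY := li_subst z0 hli2
      have hxY : β w (y + z0 • w) = w + (p + z0 * s) • c := by
        rw [map_add, map_smul, hxy, hxx]
        module
      have hYx : β (y + z0 • w) w = -(w + (p + z0 * s) • c) := by
        simp only [map_add, LinearMap.add_apply, map_smul, LinearMap.smul_apply, hyx, hxx]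
        linear_combination (norm := module) z0 • h2s
      have hYY : β (y + z0 • w) (y + z0 • w) = (0 : F) • c := by
        rw [zero_smul]
        simp only [map_add, LinearMap.add_apply, map_smul, LinearMap.smul_apply,
          hxy, hyx, hxx, hyy]
        have htsc : (t + z0 * z0 * s) • c = 0 := by rw [hts, zero_smul]
        linear_combination (norm := module) htsc
      exact caseA β hdim hliY hcL hcR hxY hYx hYY hxx hs0 (Or.inl rfl)
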